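/- In any proper edge 3-coloring of a planar cubic graph G, regarded as a formation, the product over all vertices of i·ε applied to the cyclic color order at the vertex equals (−√(-1)·√(-1)) raised to the number of bounces times (−1) raised to the number of crossings, which equals (+1)^{bounces}·(−1)^{crossings}; and the number of crossings among the curves of a planar formation is always even, so the total product is +1. -/

import Mathlib

namespace FourColor

/-- The rotation permutation on darts: at every vertex the three darts are
cyclically permuted, the cyclic order coming from the embedding. -/
def rotD (V : Type) : Equiv.Perm (V × Fin 3) :=
  Equiv.prodCongr (Equiv.refl V) (finRotate 3)

/-- A cubic graph with an embedding (rotation system) given as a combinatorial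
map: darts are pairs (vertex, position in the cyclic order at that vertex),
and the fixed-point-free involution `α` pairs the two darts of each edge. -/
structure CubicMap (V : Type) where
  α : Equiv.Perm (V × Fin 3)
  invol : ∀ d, α (α d) = d
  fixfree : ∀ d, α d ≠ d

namespace CubicMap

variable {V : Type}

/-- The face permutation of the combinatorial map. -/
def facePerm (M : CubicMap V) : Equiv.Perm (V × Fin 3) := rotD V * M.α

/-- Darts on a common face. -/
def faceSetoid (M : CubicMap V) : Setoid (V × Fin 3) :=
  ⟨M.facePerm.SameCycle, Equiv.Perm.SameCycle.equivalence M.facePerm⟩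

/-- The number of faces of the embedding. -/
noncomputable def nfaces (M : CubicMap V) : ℕ := Nat.card (Quotient M.faceSetoid)

/-- Connectivity of the map. -/
def ConnectedMap (M : CubicMap V) : Prop :=
  ∀ d d' : V × Fin 3, Relation.ReflTransGen (fun x y => y = M.α x ∨ y = rotD V x) d d'

/-- The map is an embedding in the plane (sphere): it is connected and
satisfies Euler's formula `V - E + F = 2`, where `E = 3|V|/2`; equivalently
`2F = 4 + |V|`. -/
def PlanarMap [Fintype V] (M : CubicMap V) : Prop :=
  M.ConnectedMap ∧ 2 * M.nfaces = 4 + Fintype.card V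

/-- A labeling of the darts by colors `{0,1,2}` constant on edges, i.e. a
function from edges to colors. -/
def EdgeLabeling (M : CubicMap V) (f : V × Fin 3 → Fin 3) : Prop :=
  ∀ d, f (M.α d) = f d

/-- A proper edge 3-coloring: an edge labeling with three distinct colors at
each vertex. -/
def ProperMap (M : CubicMap V) (f : V × Fin 3 → Fin 3) : Prop :=
  M.EdgeLabeling f ∧ ∀ v : V, Function.Injective fun i : Fin 3 => f (v, i)

end CubicMap

/-- The alternating (epsilon) tensor on three indices: the sign of the cyclic
word `i j k`. -/
def eps (i j k : Fin 3) : ℤ :=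
  if i = j ∨ j = k ∨ i = k then 0 else if j = i + 1 then 1 else -1

open CubicMap in
/-- The Penrose summation: the sum over all edge colorings (by `{0,1,2}`) of
the product over vertices of `√-1 · ε` applied to the colors of the three
incident edges in the cyclic order at that vertex. -/
noncomputable def penroseSum {V : Type} [Fintype V] (M : CubicMap V) : ℂ :=
  letI := Classical.decEq V
  letI := Classical.decPred (M.EdgeLabeling)
  ∑ f : {f : V × Fin 3 → Fin 3 // M.EdgeLabeling f},
    ∏ v : V, (Complex.I * ((eps (f.1 (v, 0)) (f.1 (v, 1)) (f.1 (v, 2)) : ℤ) : ℂ))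

end FourColor

open FourColor CubicMap

namespace FourColor

/-- The sign `ε` of a vertex in a properly colored cubic map. -/
def vsign {V : Type} (f : V × Fin 3 → Fin 3) (v : V) : ℤ :=
  eps (f (v, 0)) (f (v, 1)) (f (v, 2))

open CubicMap in
/-- The number of crossings of the formation of a proper coloring `f` (purple
= color `2`): purple edges whose two endpoint vertices carry equal signs. -/
def ncross {V : Type} [Fintype V] (M : CubicMap V) (f : V × Fin 3 → Fin 3) : ℕ :=
  (Finset.univ.filter fun d : V × Fin 3 =>
      f d = 2 ∧ vsign f d.1 = vsign f (M.α d).1).card / 2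

open CubicMap in
/-- The number of bounces: purple edges whose two endpoint vertices carry
opposite signs. -/
def nbounce {V : Type} [Fintype V] (M : CubicMap V) (f : V × Fin 3 → Fin 3) : ℕ :=
  (Finset.univ.filter fun d : V × Fin 3 =>
      f d = 2 ∧ vsign f d.1 ≠ vsign f (M.α d).1).card / 2

end FourColor


namespace FourColor

lemma eps_pm (σ : Equiv.Perm (Fin 3)) :
    eps (σ 0) (σ 1) (σ 2) = 1 ∨ eps (σ 0) (σ 1) (σ 2) = -1 := by
  revert σ; decide

lemma L2 (σ : Equiv.Perm (Fin 3)) (a b : Fin 3 → ZMod 2)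
    (ha : ∀ i, a (i + 1) = a i + (if σ i = 1 then 0 else 1))
    (hb : ∀ i, b (i + 1) = b i + (if σ i = 0 then 0 else 1)) :
    (∑ i : Fin 3, if σ i = 1 then 0 else
        (a (σ.symm (2 - σ i)) * b (σ.symm (2 - σ i)) + a (i + 1) * b (i + 1)))
      = a (σ.symm 2) + (if eps (σ 0) (σ 1) (σ 2) = -1 then 1 else 0) := by
  revert σ a b; decide

variable {X : Type} [Fintype X] [DecidableEq X]

omit [Fintype X] [DecidableEq X] in
lemma card_split (π : Equiv.Perm X) (hinv : ∀ d, π (π d) = d)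
    (S : Finset X) (hS : ∀ d ∈ S, π d ∈ S) (q : X → Prop) [DecidablePred q]
    (hflip : ∀ d ∈ S, (q (π d) ↔ ¬ q d)) :
    S.card = 2 * (S.filter q).card := by
  have h1 : (S.filter (fun d => ¬ q d)).card = (S.filter q).card := by
    apply Finset.card_bij' (fun a _ => π a) (fun b _ => π b)
    · intro a ha
      simp only [Finset.mem_filter] at ha ⊢
      exact ⟨hS a ha.1, (hflip a ha.1).mpr ha.2⟩
    · intro b hb
      simp only [Finset.mem_filter] at hb ⊢
      refine ⟨hS b hb.1, ?_⟩
      intro hq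
      exact ((hflip b hb.1).mp hq) hb.2
    · intro a _; exact hinv a
    · intro b _; exact hinv b
  have h2 := Finset.card_filter_add_card_filter_not (s := S) (p := q)
  omega

omit [Fintype X] [DecidableEq X] in
lemma sum_split (π : Equiv.Perm X) (hinv : ∀ d, π (π d) = d)
    (S : Finset X) (hS : ∀ d ∈ S, π d ∈ S) (ψ : X → ZMod 2)
    (hflip : ∀ d ∈ S, ψ (π d) = ψ d + 1) :
    S.card = 2 * (S.filter (fun d => ψ d = 1)).card ∧
      ∑ d ∈ S, ψ d = ((S.filter (fun d => ψ d = 1)).card : ZMod 2) := by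
  have hq : ∀ d ∈ S, ((fun d => ψ d = 1) (π d) ↔ ¬ (fun d => ψ d = 1) d) := by
    intro d hd
    simp only [hflip d hd]
    constructor
    · intro h h2; rw [h2] at h; simp at h
    · intro h
      have : ψ d = 0 := by revert h; generalize ψ d = x; revert x; decide
      rw [this]; decide
  refine ⟨card_split π hinv S hS _ hq, ?_⟩
  rw [← Finset.sum_filter_add_sum_filter_not S (fun d => ψ d = 1)]
  have e0 : ∑ d ∈ S.filter (fun d => ¬ ψ d = 1), ψ d = 0 := by
    apply Finset.sum_eq_zero
    intro x hx
    simp only [Finset.mem_filter] at hx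
    have h2 := hx.2
    revert h2; generalize ψ x = y; revert y; decide
  have e1 : ∑ d ∈ S.filter (fun d => ψ d = 1), ψ d
      = ((S.filter (fun d => ψ d = 1)).card : ZMod 2) := by
    rw [Finset.sum_congr rfl (fun x hx => (Finset.mem_filter.mp hx).2)]
    simp [Finset.sum_const, nsmul_eq_mul]
  rw [e0, e1, add_zero]

open Module CubicMap

variable {X : Type} [Fintype X]

def fixSub (π : Equiv.Perm X) : Submodule (ZMod 2) (X → ZMod 2) where
  carrier := {g | ∀ x, g (π x) = g x}
  add_mem' := by intro a b ha hb x; simp [ha x, hb x]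
  zero_mem' := by intro x; rfl
  smul_mem' := by intro c g hg x; simp [hg x]

lemma fix_zpow {π : Equiv.Perm X} {g : X → ZMod 2} (hg : ∀ x, g (π x) = g x) :
    ∀ (i : ℤ) (x : X), g ((π ^ i) x) = g x := by
  have hn : ∀ (n : ℕ) (x : X), g ((π ^ n) x) = g x := by
    intro n
    induction n with
    | zero => intro x; rfl
    | succ k ih => intro x; rw [pow_succ, Equiv.Perm.mul_apply, ih, hg]
  intro i x
  rcases i with n | n
  · exact hn n x
  · rw [zpow_negSucc]
    have := hn (n + 1) ((π ^ (n + 1))⁻¹ x)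
    simp only [← Equiv.Perm.mul_apply, mul_inv_cancel, Equiv.Perm.one_apply] at this
    exact this.symm

noncomputable def fixEquiv (π : Equiv.Perm X) (s : Setoid X)
    (hs : ∀ x y, s.r x y ↔ π.SameCycle x y) :
    fixSub π ≃ₗ[ZMod 2] (Quotient s → ZMod 2) where
  toFun g := Quotient.lift (g : X → ZMod 2) (by
    intro x y hxy
    obtain ⟨i, hi⟩ := (hs x y).mp hxy
    rw [← hi]; exact (fix_zpow g.2 i x).symm)
  map_add' g h := by ext q; induction q using Quotient.ind; rfl
  map_smul' c g := by ext q; induction q using Quotient.ind; rfl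
  invFun h := ⟨fun x => h (Quotient.mk s x), by
    intro x
    show h (Quotient.mk s (π x)) = h (Quotient.mk s x)
    congr 1
    exact Quotient.sound ((hs _ _).mpr ⟨-1, by simp⟩)⟩
  left_inv g := by ext x; rfl
  right_inv h := by ext q; induction q using Quotient.ind; rfl

lemma finrank_fixSub (π : Equiv.Perm X) (s : Setoid X)
    (hs : ∀ x y, s.r x y ↔ π.SameCycle x y) :
    finrank (ZMod 2) (fixSub π) = Nat.card (Quotient s) := by
  classical
  have : Finite (Quotient s) := Quotient.finite s
  have := Fintype.ofFinite (Quotient s)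
  rw [(fixEquiv π s hs).finrank_eq, finrank_pi (ZMod 2), Nat.card_eq_fintype_card]

omit [Fintype X] in
lemma invol_zpow (π : Equiv.Perm X) (hinv : ∀ d, π (π d) = d) (i : ℤ) :
    π ^ i = 1 ∨ π ^ i = π := by
  have h2 : π ^ (2 : ℤ) = 1 := by
    ext x; simp [zpow_ofNat, pow_succ, hinv x]
  rcases Int.even_or_odd i with ⟨k, hk⟩ | ⟨k, hk⟩
  · left; rw [hk, ← two_mul, zpow_mul, h2, one_zpow]
  · right; rw [hk, zpow_add, zpow_mul, h2, one_zpow, one_mul, zpow_one]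

omit [Fintype X] in
lemma sameCycle_invol (π : Equiv.Perm X) (hinv : ∀ d, π (π d) = d) (x y : X) :
    π.SameCycle x y ↔ y = x ∨ y = π x := by
  constructor
  · rintro ⟨i, hi⟩
    rcases invol_zpow π hinv i with h | h <;> rw [h] at hi
    · left; exact hi.symm
    · right; exact hi.symm
  · rintro (rfl | rfl)
    · exact ⟨0, rfl⟩
    · exact ⟨1, rfl⟩

lemma card_invol (π : Equiv.Perm X) (hinv : ∀ d, π (π d) = d) (hff : ∀ d, π d ≠ d)
    (s : Setoid X) (hs : ∀ x y, s.r x y ↔ π.SameCycle x y) :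
    Fintype.card X = 2 * Nat.card (Quotient s) := by
  classical
  have : Finite (Quotient s) := Quotient.finite s
  have inst := Fintype.ofFinite (Quotient s)
  rw [Nat.card_eq_fintype_card]
  rw [← Finset.card_univ, Finset.card_eq_sum_card_fiberwise
    (f := fun x => Quotient.mk s x) (t := Finset.univ) (fun x _ => Finset.mem_univ _)]
  rw [← Finset.card_univ (α := Quotient s), Finset.card_eq_sum_ones (Finset.univ (α := Quotient s)),
    Finset.mul_sum]
  apply Finset.sum_congr rfl
  intro q _
  obtain ⟨d, rfl⟩ := Quotient.exists_rep q
  have : (Finset.univ.filter fun x => Quotient.mk s x = Quotient.mk s d) = {d, π d} := by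
    ext x
    simp only [Finset.mem_filter, Finset.mem_univ, true_and, Finset.mem_insert,
      Finset.mem_singleton]
    rw [Quotient.eq]
    show s.r x d ↔ _
    rw [hs, sameCycle_invol π hinv]
    constructor
    · rintro (rfl | h)
      · left; rfl
      · right; rw [h, hinv]
    · rintro (rfl | rfl)
      · left; rfl
      · right; rw [hinv]
  rw [this, Finset.card_insert_of_notMem (by simp only [Finset.mem_singleton]; exact fun h => hff d h.symm),
    Finset.card_singleton]
  norm_num

section Potential

variable {V : Type} [Fintype V]

/-- the vertex-sum linear map -/
noncomputable def vsum (V : Type) [Fintype V] : ((V × Fin 3) → ZMod 2) →ₗ[ZMod 2] (V → ZMod 2) where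
  toFun g := fun v => ∑ i : Fin 3, g (v, i)
  map_add' a b := by funext v; simp [Finset.sum_add_distrib]
  map_smul' c a := by funext v; simp [Finset.mul_sum]

/-- the coboundary map -/
noncomputable def cobD (M : CubicMap V) : ((V × Fin 3) → ZMod 2) →ₗ[ZMod 2] ((V × Fin 3) → ZMod 2) where
  toFun g := fun d => g d + g (M.α d)
  map_add' a b := by funext d; simp; ring
  map_smul' c a := by funext d; simp; ring

/-- the total-sum functional -/
noncomputable def tsum (V : Type) [Fintype V] : (V → ZMod 2) →ₗ[ZMod 2] ZMod 2 where
  toFun h := ∑ v : V, h v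
  map_add' a b := by simp [Finset.sum_add_distrib]
  map_smul' c a := by simp [Finset.mul_sum]

lemma zmod2_add_self (a : ZMod 2) : a + a = 0 := by revert a; decide

lemma zmod2_eq_of_add_eq_zero : ∀ a b : ZMod 2, a + b = 0 → b = a := by decide

lemma fun_add_self {Y : Type} (x : Y → ZMod 2) : x + x = 0 := by
  funext v; exact zmod2_add_self (x v)

lemma exists_potential (M : CubicMap V)
    (hconn : M.ConnectedMap) (heuler : 2 * M.nfaces = 4 + Fintype.card V)
    (noloop : ∀ d : V × Fin 3, (M.α d).1 ≠ d.1)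
    (r : V × Fin 3 → ZMod 2) (hr1 : ∀ d, r (M.α d) = r d)
    (hr2 : ∀ v : V, ∑ i : Fin 3, r (v, i) = 0) :
    ∃ ψ : V × Fin 3 → ZMod 2,
      (∀ d, ψ (M.facePerm d) = ψ d) ∧ (∀ d, ψ (M.α d) = ψ d + r d) := by
  classical
  letI : DecidableEq V := Classical.decEq V
  -- V is nonempty
  have hVne : Nonempty V := by
    by_contra h
    rw [not_nonempty_iff] at h
    have : IsEmpty (Quotient M.faceSetoid) := by
      constructor
      intro q
      obtain ⟨d, _⟩ := Quotient.exists_rep q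
      exact (h.false d.1)
    rw [nfaces, Nat.card_of_isEmpty] at heuler
    simp [Fintype.card_eq_zero] at heuler
  have hXne : Nonempty (V × Fin 3) := ⟨(Classical.arbitrary V, 0)⟩
  -- numerology
  have hcX : Fintype.card (V × Fin 3) = 3 * Fintype.card V := by
    rw [Fintype.card_prod, Fintype.card_fin]; ring
  set sα : Setoid (V × Fin 3) := ⟨M.α.SameCycle, Equiv.Perm.SameCycle.equivalence M.α⟩ with hsα
  have h2 : Fintype.card (V × Fin 3) = 2 * Nat.card (Quotient sα) :=
    card_invol M.α M.invol M.fixfree sα (fun x y => Iff.rfl)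
  set E := Nat.card (Quotient sα) with hE
  obtain ⟨m, hm⟩ : ∃ m, Fintype.card V = 2 * m := ⟨E - Fintype.card V, by omega⟩
  -- the fixed subspaces
  set Φ : Submodule (ZMod 2) ((V × Fin 3) → ZMod 2) := fixSub M.facePerm with hΦ
  set V1 : Submodule (ZMod 2) ((V × Fin 3) → ZMod 2) := fixSub M.α with hV1
  have hfrΦ : finrank (ZMod 2) Φ = m + 2 := by
    rw [hΦ, finrank_fixSub M.facePerm M.faceSetoid (fun x y => Iff.rfl)]
    have hfF : Nat.card (Quotient M.faceSetoid) = M.nfaces := rfl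
    omega
  have hfrV1 : finrank (ZMod 2) V1 = 3 * m := by
    rw [hV1, finrank_fixSub M.α sα (fun x y => Iff.rfl)]
    omega
  -- the linear algebra
  have hmpos : 1 ≤ m := by
    have : 0 < Fintype.card V := Fintype.card_pos_iff.mpr hVne
    omega
  -- kernel of D restricted to Φ is the constants
  have hconst : ∀ g, g ∈ Φ → cobD M g = 0 → ∀ d d' : V × Fin 3, g d = g d' := by
    intro g hg hDg d d'
    have hgf : ∀ x, g (M.facePerm x) = g x := hg
    have hα : ∀ x, g (M.α x) = g x := by
      intro x
      have h1 : g x + g (M.α x) = 0 := congrFun hDg x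
      exact zmod2_eq_of_add_eq_zero _ _ h1
    have hrot : ∀ x, g (rotD V x) = g x := by
      intro x
      have h1 : rotD V x = M.facePerm (M.α x) := by
        show rotD V x = (rotD V) (M.α (M.α x))
        rw [M.invol]
      rw [h1, hgf, hα]
    have hreach := hconn d d'
    induction hreach with
    | refl => rfl
    | tail hab step ih =>
      rcases step with rfl | rfl
      · rw [hα]; exact ih
      · rw [hrot]; exact ih
  have honeΦ : (fun _ : V × Fin 3 => (1 : ZMod 2)) ∈ Φ := fun x => rfl
  have hkerD : LinearMap.ker ((cobD M).domRestrict Φ)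
      = Submodule.span (ZMod 2) {(⟨fun _ => 1, honeΦ⟩ : Φ)} := by
    apply le_antisymm
    · intro x hx
      rw [Submodule.mem_span_singleton]
      obtain ⟨x0⟩ := hXne
      have hxk : cobD M x.1 = 0 := hx
      refine ⟨x.1 x0, ?_⟩
      apply Subtype.ext
      funext y
      show x.1 x0 * 1 = x.1 y
      rw [mul_one]
      exact hconst x.1 x.2 hxk x0 y
    · rw [Submodule.span_le, Set.singleton_subset_iff]
      show cobD M (fun _ => 1) = 0
      funext d
      exact zmod2_add_self 1
  have hfrker : finrank (ZMod 2) (LinearMap.ker ((cobD M).domRestrict Φ)) = 1 := by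
    rw [hkerD]
    apply finrank_span_singleton
    intro hcontr
    obtain ⟨x0⟩ := hXne
    have := congrFun (congrArg Subtype.val hcontr) x0
    exact one_ne_zero this
  have hfrR : finrank (ZMod 2) (Submodule.map (cobD M) Φ) = m + 1 := by
    have h1 := LinearMap.finrank_range_add_finrank_ker ((cobD M).domRestrict Φ)
    rw [LinearMap.range_domRestrict, hfrker, hfrΦ] at h1
    omega
  -- single vertex and single dart vectors
  set uX : (V × Fin 3) → ((V × Fin 3) → ZMod 2) := fun x => Pi.single x 1 with huX
  set uV : V → (V → ZMod 2) := fun u => Pi.single u 1 with huV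
  have hSu : ∀ x : V × Fin 3, vsum V (uX x) = uV x.1 := by
    intro x; funext v
    show (∑ i : Fin 3, uX x (v, i)) = uV x.1 v
    simp only [huX, huV]
    by_cases hv : v = x.1
    · subst hv
      rw [Pi.single_apply, if_pos rfl]
      rw [Finset.sum_eq_single x.2]
      · rw [Pi.single_apply, if_pos rfl]
      · intro i _ hi
        rw [Pi.single_apply, if_neg]
        intro hcontr
        exact hi (congrArg Prod.snd hcontr)
      · intro h; exact absurd (Finset.mem_univ _) h
    · rw [Pi.single_apply, if_neg hv]
      apply Finset.sum_eq_zero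
      intro i _
      rw [Pi.single_apply, if_neg]
      intro hcontr
      exact hv (congrArg Prod.fst hcontr)
  have heVecV1 : ∀ x : V × Fin 3,
      (uX x + uX (M.α x)) ∈ V1 := by
    intro x y
    show uX x (M.α y) + uX (M.α x) (M.α y)
        = uX x y + uX (M.α x) y
    simp only [huX]
    have e1 : (M.α y = x) ↔ (y = M.α x) := by
      constructor
      · intro h; rw [← h, M.invol]
      · intro h; rw [h, M.invol]
    have e2 : (M.α y = M.α x) ↔ (y = x) := by
      constructor
      · intro h; exact M.α.injective h
      · intro h; rw [h]
    simp only [Pi.single_apply]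
    rw [if_congr e1 rfl rfl, if_congr e2 rfl rfl]
    exact add_comm _ _
  -- all difference-of-vertex vectors lie in T
  have hpair : ∀ u w : V,
      (uV u + uV w) ∈ Submodule.map (vsum V) V1 := by
    have key : ∀ d d' : V × Fin 3, Relation.ReflTransGen (fun x y => y = M.α x ∨ y = rotD V x) d d' →
        (uV d.1 + uV d'.1) ∈ Submodule.map (vsum V) V1 := by
      intro d d' hreach
      induction hreach with
      | refl => rw [fun_add_self]; exact Submodule.zero_mem _
      | @tail b c hab step ih =>
        rcases step with rfl | rfl
        · have hmem : (uV b.1 + uV (M.α b).1)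
              ∈ Submodule.map (vsum V) V1 := by
            refine ⟨uX b + uX (M.α b), heVecV1 b, ?_⟩
            rw [map_add, hSu, hSu]
          have heq : (uV d.1 + uV b.1)
              + (uV b.1 + uV (M.α b).1)
              = Pi.single d.1 1 + uV (M.α b).1 := by
            rw [add_assoc, ← add_assoc (uV b.1), fun_add_self, zero_add]
          rw [← heq]
          exact Submodule.add_mem _ ih hmem
        · exact ih
    intro u w
    exact key (u, 0) (w, 0) (hconn _ _)
  have htsum_single : ∀ u : V, tsum V (uV u) = 1 := by
    intro u
    show (∑ v : V, uV u v) = 1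
    simp only [huV]
    rw [Finset.sum_eq_single u]
    · rw [Pi.single_apply, if_pos rfl]
    · intro v _ hv; rw [Pi.single_apply, if_neg hv]
    · intro h; exact absurd (Finset.mem_univ _) h
  have hTevens : Submodule.map (vsum V) V1 = LinearMap.ker (tsum V) := by
    apply le_antisymm
    · rintro _ ⟨g, hg, rfl⟩
      show tsum V (vsum V g) = 0
      have h1 : tsum V (vsum V g) = ∑ d : V × Fin 3, g d := by
        show (∑ v : V, ∑ i : Fin 3, g (v, i)) = _
        rw [← Fintype.sum_prod_type]
      rw [h1]
      apply Finset.sum_involution (fun d _ => M.α d)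
      · intro a _
        have : g (M.α a) = g a := hg a
        rw [this]; exact zmod2_add_self (g a)
      · intro a _ _; exact fun h => M.fixfree a h
      · intro a _; exact Finset.mem_univ _
      · intro a _; exact M.invol a
    · have key : ∀ (k : ℕ) (h : V → ZMod 2),
          (Finset.univ.filter fun v => h v ≠ 0).card ≤ k → tsum V h = 0 →
          h ∈ Submodule.map (vsum V) V1 := by
        intro k
        induction k with
        | zero =>
          intro h hc _
          have hfe : (Finset.univ.filter fun v => h v ≠ 0) = ∅ :=
            Finset.card_eq_zero.mp (Nat.le_zero.mp hc)
          have : h = 0 := by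
            funext v
            by_contra hv
            have : v ∈ Finset.univ.filter fun v => h v ≠ 0 := by
              simp only [Finset.mem_filter, Finset.mem_univ, true_and]; exact hv
            rw [hfe] at this
            exact absurd this (Finset.notMem_empty v)
          rw [this]; exact Submodule.zero_mem _
        | succ k ih =>
          intro h hc h0
          by_cases hz : (Finset.univ.filter fun v => h v ≠ 0).card = 0
          · exact ih h (by omega) h0
          · have hne : (Finset.univ.filter fun v => h v ≠ 0).Nonempty :=
              Finset.card_pos.mp (by omega)
            obtain ⟨u, hu⟩ := hne
            -- the support has even cardinality
            have hsum : ((Finset.univ.filter fun v => h v ≠ 0).card : ZMod 2) = 0 := by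
              have e1 : ∀ v ∈ (Finset.univ.filter fun v => h v ≠ 0), h v = 1 := by
                intro v hv
                have hv' := (Finset.mem_filter.mp hv).2
                revert hv'
                generalize h v = a
                revert a; decide
              have e2 : (∑ v ∈ (Finset.univ.filter fun v => h v ≠ 0), h v)
                  = ((Finset.univ.filter fun v => h v ≠ 0).card : ZMod 2) := by
                rw [Finset.sum_congr rfl e1, Finset.sum_const, nsmul_eq_mul, mul_one]
              have e3 : (∑ v ∈ (Finset.univ.filter fun v => h v ≠ 0), h v) = ∑ v : V, h v :=
                Finset.sum_filter_of_ne (fun v _ hv => hv)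
              rw [← e2, e3]
              exact h0
            have heven : 2 ∣ (Finset.univ.filter fun v => h v ≠ 0).card := by
              exact (ZMod.natCast_eq_zero_iff _ 2).mp hsum
            have hcard2 : 1 < (Finset.univ.filter fun v => h v ≠ 0).card := by omega
            obtain ⟨w, hw, hwu⟩ := Finset.exists_mem_ne hcard2 u
            set h' := h + uV u + uV w with hh'
            have hval : ∀ v : V, h' v = h v + uV u v + uV w v :=
              fun v => rfl
            have hfil : (Finset.univ.filter fun v => h' v ≠ 0)
                = ((Finset.univ.filter fun v => h v ≠ 0).erase u).erase w := by
              ext v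
              simp only [Finset.mem_filter, Finset.mem_univ, true_and, Finset.mem_erase]
              rw [hval v]
              simp only [huV]
              by_cases hvu : v = u
              · subst hvu
                rw [Pi.single_apply, if_pos rfl, Pi.single_apply, if_neg (Ne.symm hwu)]
                have h1 := (Finset.mem_filter.mp hu).2
                have : h v = 1 := by
                  revert h1; generalize h v = a; revert a; decide
                rw [this]
                simp [show (1:ZMod 2) + 1 = 0 by decide]
              · by_cases hvw : v = w
                · subst hvw
                  rw [Pi.single_apply, if_neg hvu, Pi.single_apply, if_pos rfl]
                  have h1 := (Finset.mem_filter.mp hw).2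
                  have : h v = 1 := by
                    revert h1; generalize h v = a; revert a; decide
                  rw [this]
                  simp [hvu, show (1:ZMod 2) + 1 = 0 by decide]
                · rw [Pi.single_apply, if_neg hvu, Pi.single_apply, if_neg hvw,
                    add_zero, add_zero]
                  simp [hvu, hvw]
            have hcard' : (Finset.univ.filter fun v => h' v ≠ 0).card ≤ k := by
              rw [hfil]
              have h1 : ((Finset.univ.filter fun v => h v ≠ 0).erase u).card
                  = (Finset.univ.filter fun v => h v ≠ 0).card - 1 :=
                Finset.card_erase_of_mem hu
              have h2 : (((Finset.univ.filter fun v => h v ≠ 0).erase u).erase w).card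
                  = ((Finset.univ.filter fun v => h v ≠ 0).erase u).card - 1 :=
                Finset.card_erase_of_mem (Finset.mem_erase.mpr ⟨hwu, hw⟩)
              omega
            have hts' : tsum V h' = 0 := by
              rw [hh', map_add, map_add, htsum_single, htsum_single, h0]
              decide
            have hmem' := ih h' hcard' hts'
            have hrepr : h = h' + (uV u + uV w) := by
              rw [hh']
              funext v
              show h v = h v + uV u v + uV w v
                  + (uV u v + uV w v)
              generalize h v = a
              generalize uV u v = x
              generalize uV w v = y
              revert a x y; decide
            rw [hrepr]
            exact Submodule.add_mem _ hmem' (hpair u w)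
      intro h hh
      exact key _ h le_rfl hh
  have hfr_evens : finrank (ZMod 2) (LinearMap.ker (tsum V)) = 2 * m - 1 := by
    have h1 := LinearMap.finrank_range_add_finrank_ker (tsum V)
    have h2 : LinearMap.range (tsum V) = ⊤ := by
      rw [LinearMap.range_eq_top]
      intro c
      obtain ⟨u⟩ := hVne
      refine ⟨Pi.single (M := fun _ => ZMod 2) u c, ?_⟩
      show (∑ v : V, Pi.single (M := fun _ => ZMod 2) u c v) = c
      rw [Finset.sum_eq_single u]
      · rw [Pi.single_apply, if_pos rfl]
      · intro v _ hv; rw [Pi.single_apply, if_neg hv]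
      · intro hcontr; exact absurd (Finset.mem_univ _) hcontr
    rw [h2] at h1
    rw [finrank_top] at h1
    rw [finrank_self] at h1
    have h3 : finrank (ZMod 2) (V → ZMod 2) = Fintype.card V := finrank_pi (ZMod 2)
    omega
  have hfrU : finrank (ZMod 2) ↥(V1 ⊓ LinearMap.ker (vsum V)) = m + 1 := by
    have h1 := LinearMap.finrank_range_add_finrank_ker ((vsum V).domRestrict V1)
    rw [LinearMap.range_domRestrict, hTevens, hfr_evens, hfrV1] at h1
    rw [← Submodule.map_comap_subtype, Submodule.finrank_map_subtype_eq,
      ← LinearMap.ker_domRestrict]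
    omega
  -- the image of D is contained in U
  have hRU : Submodule.map (cobD M) Φ ≤ V1 ⊓ LinearMap.ker (vsum V) := by
    rintro _ ⟨φ, hφ, rfl⟩
    have hφf : ∀ x, φ (M.facePerm x) = φ x := hφ
    have hrotφ : ∀ x : V × Fin 3, φ (M.α x) = φ (rotD V x) := by
      intro x
      have h1 : rotD V x = M.facePerm (M.α x) := by
        show rotD V x = (rotD V) (M.α (M.α x))
        rw [M.invol]
      rw [h1, hφf]
    constructor
    · intro x
      show φ (M.α x) + φ (M.α (M.α x)) = φ x + φ (M.α x)
      rw [M.invol]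
      exact add_comm _ _
    · show vsum V (cobD M φ) = 0
      funext v
      show (∑ i : Fin 3, (φ (v, i) + φ (M.α (v, i)))) = 0
      have h1 : ∀ i : Fin 3, φ (M.α (v, i)) = φ (v, i + 1) := by
        intro i
        rw [hrotφ]
        congr 1
        show (v, finRotate 3 i) = (v, i + 1)
        rw [finRotate_succ_apply]
      rw [Finset.sum_congr rfl (fun i _ => by rw [h1 i])]
      rw [Finset.sum_add_distrib]
      have h2 : (∑ i : Fin 3, φ (v, i + 1)) = ∑ i : Fin 3, φ (v, i) :=
        Fintype.sum_equiv (Equiv.addRight (1 : Fin 3)) _ _ (fun i => rfl)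
      rw [h2]
      exact zmod2_add_self _
  have hReqU : Submodule.map (cobD M) Φ = V1 ⊓ LinearMap.ker (vsum V) :=
    Submodule.eq_of_le_of_finrank_le hRU (by rw [hfrU, hfrR])
  have hrU : r ∈ V1 ⊓ LinearMap.ker (vsum V) := by
    constructor
    · intro x
      show r (M.α x) = r x
      exact hr1 x
    · show vsum V r = 0
      funext v
      exact hr2 v
  rw [← hReqU] at hrU
  obtain ⟨ψ, hψΦ, hψD⟩ := hrU
  refine ⟨ψ, hψΦ, ?_⟩
  intro d
  have h1 : ψ d + ψ (M.α d) = r d := congrFun hψD d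
  have : ∀ a b c : ZMod 2, a + b = c → b = a + c := by decide
  exact this _ _ _ h1

end Potential


end FourColor

theorem stmt16 {V : Type} [Fintype V] (M : CubicMap V) (hplanar : M.PlanarMap)
    (f : V × Fin 3 → Fin 3) (hf : M.ProperMap f) :
    (∏ v : V, (Complex.I * ((vsign f v : ℤ) : ℂ)))
        = (1 : ℂ) ^ (nbounce M f) * (-1 : ℂ) ^ (ncross M f) ∧
    Even (ncross M f) ∧
    (∏ v : V, (Complex.I * ((vsign f v : ℤ) : ℂ))) = 1 := by
  classical
  letI : DecidableEq V := Classical.decEq V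
  obtain ⟨hconn, heuler⟩ := hplanar
  obtain ⟨hlab, hinj⟩ := hf
  -- the permutation of colors at each vertex
  have hbij : ∀ v : V, Function.Bijective (fun i : Fin 3 => f (v, i)) :=
    fun v => Finite.injective_iff_bijective.mp (hinj v)
  set σ : V → Equiv.Perm (Fin 3) := fun v => Equiv.ofBijective _ (hbij v) with hσ
  have hσ_app : ∀ (v : V) (i : Fin 3), σ v i = f (v, i) := fun v i => rfl
  have hfpos : ∀ (v : V) (c : Fin 3), f (v, (σ v).symm c) = c :=
    fun v c => (σ v).apply_symm_apply c
  have hposf : ∀ d : V × Fin 3, (d.1, (σ d.1).symm (f d)) = d := by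
    intro d
    have e : σ d.1 d.2 = f d := congrArg f (Prod.mk.eta)
    have h1 : (σ d.1).symm (f d) = d.2 := by
      rw [Equiv.symm_apply_eq]; exact e.symm
    rw [h1]
  have hpm : ∀ v : V, vsign f v = 1 ∨ vsign f v = -1 := fun v => eps_pm (σ v)
  -- no loops
  have noloop : ∀ d : V × Fin 3, (M.α d).1 ≠ d.1 := by
    intro d heq
    have h1 : f (d.1, (M.α d).2) = f (d.1, d.2) := by
      have h2 : (d.1, (M.α d).2) = M.α d := by
        rw [← heq]
      rw [h2, hlab, Prod.mk.eta]
    have h3 : (M.α d).2 = d.2 := hinj d.1 h1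
    exact M.fixfree d (Prod.ext heq h3)
  -- the two potentials
  have hred : ∃ ψ : V × Fin 3 → ZMod 2, (∀ d, ψ (M.facePerm d) = ψ d) ∧
      (∀ d, ψ (M.α d) = ψ d + (if f d = 1 then 0 else 1)) := by
    apply exists_potential M hconn heuler noloop
    · intro d; rw [hlab]
    · intro v
      calc (∑ i : Fin 3, (if f (v, i) = 1 then (0 : ZMod 2) else 1))
          = ∑ i : Fin 3, (fun c : Fin 3 => if c = 1 then (0 : ZMod 2) else 1) (σ v i) := rfl
        _ = ∑ c : Fin 3, (fun c : Fin 3 => if c = 1 then (0 : ZMod 2) else 1) c :=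
            Equiv.sum_comp (σ v) (fun c : Fin 3 => if c = 1 then (0 : ZMod 2) else 1)
        _ = 0 := by decide
  have hblue : ∃ ψ : V × Fin 3 → ZMod 2, (∀ d, ψ (M.facePerm d) = ψ d) ∧
      (∀ d, ψ (M.α d) = ψ d + (if f d = 0 then 0 else 1)) := by
    apply exists_potential M hconn heuler noloop
    · intro d; rw [hlab]
    · intro v
      calc (∑ i : Fin 3, (if f (v, i) = 0 then (0 : ZMod 2) else 1))
          = ∑ i : Fin 3, (fun c : Fin 3 => if c = 0 then (0 : ZMod 2) else 1) (σ v i) := rfl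
        _ = ∑ c : Fin 3, (fun c : Fin 3 => if c = 0 then (0 : ZMod 2) else 1) c :=
            Equiv.sum_comp (σ v) (fun c : Fin 3 => if c = 0 then (0 : ZMod 2) else 1)
        _ = 0 := by decide
  obtain ⟨ψR, hψRf, hψRα⟩ := hred
  obtain ⟨ψB, hψBf, hψBα⟩ := hblue
  -- around-vertex relations
  have hrot : ∀ (v : V) (i : Fin 3), M.facePerm (M.α (v, i)) = (v, i + 1) := by
    intro v i
    show (rotD V) (M.α (M.α (v, i))) = (v, i + 1)
    rw [M.invol]
    show (v, finRotate 3 i) = (v, i + 1)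
    rw [finRotate_succ_apply]
  have haR : ∀ (v : V) (i : Fin 3),
      ψR (v, i + 1) = ψR (v, i) + (if f (v, i) = 1 then 0 else 1) := by
    intro v i; rw [← hrot v i, hψRf, hψRα]
  have haB : ∀ (v : V) (i : Fin 3),
      ψB (v, i + 1) = ψB (v, i) + (if f (v, i) = 0 then 0 else 1) := by
    intro v i; rw [← hrot v i, hψBf, hψBα]
  have hRalt : ∀ (v : V) (i : Fin 3), ψR (M.α (v, i)) = ψR (v, i + 1) := by
    intro v i; rw [← hrot v i, hψRf]
  have hBalt : ∀ (v : V) (i : Fin 3), ψB (M.α (v, i)) = ψB (v, i + 1) := by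
    intro v i; rw [← hrot v i, hψBf]
  -- the transfer map along the red-purple curves
  set hfun : V × Fin 3 → ZMod 2 := fun d => ψR d * ψB d with hhfun
  set N : V × Fin 3 → V × Fin 3 :=
    fun d => ((M.α d).1, (σ (M.α d).1).symm (2 - f d)) with hN
  set N' : V × Fin 3 → V × Fin 3 :=
    fun d => M.α (d.1, (σ d.1).symm (2 - f d)) with hN'
  have hfN : ∀ d : V × Fin 3, f (N d) = 2 - f d := fun d => hfpos _ _
  have hfN' : ∀ d : V × Fin 3, f (N' d) = 2 - f d := by
    intro d
    show f (M.α (d.1, (σ d.1).symm (2 - f d))) = 2 - f d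
    rw [hlab, hfpos]
  have hsub : ∀ c : Fin 3, 2 - (2 - c) = c := by decide
  have hne1 : ∀ c : Fin 3, c ≠ 1 → 2 - c ≠ 1 := by decide
  have hNN' : ∀ d : V × Fin 3, N' (N d) = d := by
    intro d
    show M.α ((N d).1, (σ (N d).1).symm (2 - f (N d))) = d
    rw [hfN d, hsub]
    have h1 : ((N d).1, (σ (N d).1).symm (f d)) = M.α d := by
      show ((M.α d).1, (σ (M.α d).1).symm (f d)) = M.α d
      rw [show f d = f (M.α d) from (hlab d).symm]
      exact hposf (M.α d)
    rw [h1, M.invol]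
  have hN'N : ∀ d : V × Fin 3, N (N' d) = d := by
    intro d
    show ((M.α (N' d)).1, (σ (M.α (N' d)).1).symm (2 - f (N' d))) = d
    rw [hfN' d, hsub]
    have h1 : M.α (N' d) = (d.1, (σ d.1).symm (2 - f d)) := by
      show M.α (M.α (d.1, (σ d.1).symm (2 - f d))) = _
      rw [M.invol]
    rw [h1]
    exact hposf d
  -- the global curve–transfer sum
  set Sred : Finset (V × Fin 3) := Finset.univ.filter (fun d => f d ≠ 1) with hSred
  have hmemS : ∀ d : V × Fin 3, d ∈ Sred ↔ f d ≠ 1 := by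
    intro d; rw [hSred, Finset.mem_filter]; simp
  have step1 : ∑ d ∈ Sred, (hfun (N d) + hfun d) = 0 := by
    have e : ∑ d ∈ Sred, hfun (N d) = ∑ d ∈ Sred, hfun d := by
      apply Finset.sum_nbij' N N'
      · intro a ha; rw [hmemS] at ha ⊢; rw [hfN a]; exact hne1 _ ha
      · intro a ha; rw [hmemS] at ha ⊢; rw [hfN' a]; exact hne1 _ ha
      · intro a _; exact hNN' a
      · intro a _; exact hN'N a
      · intro a _; rfl
    rw [Finset.sum_add_distrib, e]
    generalize (∑ d ∈ Sred, hfun d) = z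
    revert z; decide
  have step2 : ∑ d ∈ Sred, (hfun (N d) + hfun d)
      = ∑ d ∈ Sred, (hfun (N (M.α d)) + hfun (M.α d)) := by
    apply Finset.sum_nbij' M.α M.α
    · intro a ha; rw [hmemS] at ha ⊢; rw [hlab]; exact ha
    · intro a ha; rw [hmemS] at ha ⊢; rw [hlab]; exact ha
    · intro a _; exact M.invol a
    · intro a _; exact M.invol a
    · intro a _; rw [M.invol]
  have step3 : ∑ d ∈ Sred, (hfun (N (M.α d)) + hfun (M.α d))
      = ∑ v : V, ∑ i : Fin 3,
          (if f (v, i) ≠ 1 then (hfun (N (M.α (v, i))) + hfun (M.α (v, i))) else 0) := by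
    rw [hSred, Finset.sum_filter]
    exact Fintype.sum_prod_type _
  have step4 : ∀ v : V, (∑ i : Fin 3,
      (if f (v, i) ≠ 1 then (hfun (N (M.α (v, i))) + hfun (M.α (v, i))) else 0))
      = ψR (v, (σ v).symm 2) + (if vsign f v = -1 then 1 else 0) := by
    intro v
    have key := L2 (σ v) (fun i => ψR (v, i)) (fun i => ψB (v, i))
      (fun i => haR v i) (fun i => haB v i)
    refine Eq.trans (Finset.sum_congr rfl fun i _ => ?_) key
    by_cases hc : f (v, i) = 1
    · have hσi : (σ v) i = 1 := hc
      rw [hσi, if_neg (not_not_intro hc)]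
      simp
    · have hσi : ¬ (σ v) i = 1 := hc
      rw [if_pos hc, if_neg hσi]
      have hNα : N (M.α (v, i)) = (v, (σ v).symm (2 - f (v, i))) := by
        show ((M.α (M.α (v, i))).1, (σ (M.α (M.α (v, i))).1).symm (2 - f (M.α (v, i)))) = _
        rw [M.invol, hlab]
      rw [hNα]
      have hα : hfun (M.α (v, i)) = ψR (v, i + 1) * ψB (v, i + 1) := by
        show ψR (M.α (v, i)) * ψB (M.α (v, i)) = _
        rw [hRalt, hBalt]
      rw [hα]
      rfl
  -- name the finsets of darts
  set Pset : Finset (V × Fin 3) := Finset.univ.filter (fun d => f d = 2) with hPset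
  set Cset : Finset (V × Fin 3) := Finset.univ.filter
    (fun d : V × Fin 3 => f d = 2 ∧ vsign f d.1 = vsign f (M.α d).1) with hCset
  set Bset : Finset (V × Fin 3) := Finset.univ.filter
    (fun d : V × Fin 3 => f d = 2 ∧ vsign f d.1 ≠ vsign f (M.α d).1) with hBset
  set Vm : Finset V := Finset.univ.filter (fun v => vsign f v = -1) with hVm
  have hncross : ncross M f = Cset.card / 2 := rfl
  have hnbounce : nbounce M f = Bset.card / 2 := rfl
  -- collapse the sum
  have hPsum : ∑ v : V, ψR (v, (σ v).symm 2) = ∑ d ∈ Pset, ψR d := by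
    apply Finset.sum_nbij' (fun v => (v, (σ v).symm 2)) (fun d => d.1)
    · intro v _; rw [hPset, Finset.mem_filter]; exact ⟨Finset.mem_univ _, hfpos v 2⟩
    · intro d _; exact Finset.mem_univ _
    · intro v _; rfl
    · intro d hd
      rw [hPset, Finset.mem_filter] at hd
      rw [show (2 : Fin 3) = f d from hd.2.symm]
      exact hposf d
    · intro v _; rfl
  have hVmsum : ∑ v : V, (if vsign f v = -1 then (1 : ZMod 2) else 0) = (Vm.card : ZMod 2) := by
    rw [hVm]; exact Finset.sum_boole _ _
  have hPclosed : ∀ d ∈ Pset, M.α d ∈ Pset := by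
    intro d hd
    rw [hPset, Finset.mem_filter] at hd ⊢
    exact ⟨Finset.mem_univ _, by rw [hlab]; exact hd.2⟩
  have hPflip : ∀ d ∈ Pset, ψR (M.α d) = ψR d + 1 := by
    intro d hd
    rw [hPset, Finset.mem_filter] at hd
    rw [hψRα, hd.2, if_neg (by decide : ¬ (2 : Fin 3) = 1)]
  have hsplitP := sum_split M.α M.invol Pset hPclosed ψR hPflip
  have hmain : ((Pset.filter (fun d => ψR d = 1)).card : ZMod 2) + (Vm.card : ZMod 2) = 0 := by
    rw [← hsplitP.2, ← hPsum, ← hVmsum, ← Finset.sum_add_distrib,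
      ← Finset.sum_congr rfl (fun v _ => step4 v), ← step3, ← step2, step1]
  -- cardinalities
  have hPcard : Pset.card = Fintype.card V := by
    have h1 : (Finset.univ : Finset V).card = Pset.card := by
      apply Finset.card_bij' (fun v _ => (v, (σ v).symm 2)) (fun d _ => d.1)
      · intro v _; rw [hPset, Finset.mem_filter]; exact ⟨Finset.mem_univ _, hfpos v 2⟩
      · intro d _; exact Finset.mem_univ _
      · intro v _; rfl
      · intro d hd
        rw [hPset, Finset.mem_filter] at hd
        rw [show (2 : Fin 3) = f d from hd.2.symm]
        exact hposf d
    rw [← h1, Finset.card_univ]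
  have hCclosed : ∀ d ∈ Cset, M.α d ∈ Cset := by
    intro d hd
    rw [hCset, Finset.mem_filter] at hd ⊢
    refine ⟨Finset.mem_univ _, by rw [hlab]; exact hd.2.1, ?_⟩
    rw [M.invol]
    exact hd.2.2.symm
  have hBclosed : ∀ d ∈ Bset, M.α d ∈ Bset := by
    intro d hd
    rw [hBset, Finset.mem_filter] at hd ⊢
    refine ⟨Finset.mem_univ _, by rw [hlab]; exact hd.2.1, ?_⟩
    rw [M.invol]
    exact fun h => hd.2.2 h.symm
  have hCflip : ∀ d ∈ Cset, ψR (M.α d) = ψR d + 1 := by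
    intro d hd
    rw [hCset, Finset.mem_filter] at hd
    rw [hψRα, hd.2.1, if_neg (by decide : ¬ (2 : Fin 3) = 1)]
  have hCeven := (sum_split M.α M.invol Cset hCclosed ψR hCflip).1
  have hBflip : ∀ d ∈ Bset, ψR (M.α d) = ψR d + 1 := by
    intro d hd
    rw [hBset, Finset.mem_filter] at hd
    rw [hψRα, hd.2.1, if_neg (by decide : ¬ (2 : Fin 3) = 1)]
  have hBeven := (sum_split M.α M.invol Bset hBclosed ψR hBflip).1
  have hCP : Cset = Pset.filter (fun d => vsign f d.1 = vsign f (M.α d).1) := by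
    rw [hCset, hPset, Finset.filter_filter]
  have hBP : Bset = Pset.filter (fun d => ¬ vsign f d.1 = vsign f (M.α d).1) := by
    rw [hBset, hPset, Finset.filter_filter]
  have hPCB : Pset.card = Cset.card + Bset.card := by
    rw [hCP, hBP]
    exact (Finset.card_filter_add_card_filter_not _).symm
  have hncrossC : Cset.card = 2 * ncross M f := by rw [hncross]; omega
  have hnbounceB : Bset.card = 2 * nbounce M f := by rw [hnbounce]; omega
  -- decomposition of the negative vertices
  have hVmP : Vm.card = (Pset.filter (fun d => vsign f d.1 = -1)).card := by
    apply Finset.card_bij' (fun v _ => (v, (σ v).symm 2)) (fun d _ => d.1)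
    · intro v hv
      rw [hVm, Finset.mem_filter] at hv
      rw [Finset.mem_filter, hPset, Finset.mem_filter]
      exact ⟨⟨Finset.mem_univ _, hfpos v 2⟩, hv.2⟩
    · intro d hd
      rw [Finset.mem_filter] at hd
      rw [hVm, Finset.mem_filter]
      exact ⟨Finset.mem_univ _, hd.2⟩
    · intro v _; rfl
    · intro d hd
      rw [Finset.mem_filter, hPset, Finset.mem_filter] at hd
      rw [show (2 : Fin 3) = f d from hd.1.2.symm]
      exact hposf d
  have hVmsplit : (Pset.filter (fun d => vsign f d.1 = -1)).card
      = (Cset.filter (fun d => vsign f d.1 = -1)).card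
        + (Bset.filter (fun d => vsign f d.1 = -1)).card := by
    have e1 : (Pset.filter (fun d => vsign f d.1 = -1)).filter
        (fun d => vsign f d.1 = vsign f (M.α d).1)
        = Cset.filter (fun d => vsign f d.1 = -1) := by
      rw [hCP, Finset.filter_comm]
    have e2 : (Pset.filter (fun d => vsign f d.1 = -1)).filter
        (fun d => ¬ vsign f d.1 = vsign f (M.α d).1)
        = Bset.filter (fun d => vsign f d.1 = -1) := by
      rw [hBP, Finset.filter_comm]
    rw [← e1, ← e2]
    exact (Finset.card_filter_add_card_filter_not _).symm
  have hBq : (Bset.filter (fun d => vsign f d.1 = -1)).card = nbounce M f := by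
    have hflip : ∀ d ∈ Bset,
        ((fun d : V × Fin 3 => vsign f d.1 = -1) (M.α d) ↔
          ¬ (fun d : V × Fin 3 => vsign f d.1 = -1) d) := by
      intro d hd
      rw [hBset, Finset.mem_filter] at hd
      have hne := hd.2.2
      have h1 := hpm d.1
      have h2 := hpm (M.α d).1
      simp only
      constructor
      · intro ha hb
        exact hne (hb.trans ha.symm)
      · intro hb
        rcases h2 with h | h
        · rcases h1 with h' | h'
          · exact absurd (h'.trans h.symm) hne
          · exact absurd h' hb
        · exact h
    have := card_split M.α M.invol Bset hBclosed (fun d : V × Fin 3 => vsign f d.1 = -1) hflip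
    rw [hnbounce]
    omega
  obtain ⟨k, hk⟩ : ∃ k, (Cset.filter (fun d => vsign f d.1 = -1)).card = 2 * k := by
    have hSclosed : ∀ d ∈ Cset.filter (fun d => vsign f d.1 = -1),
        M.α d ∈ Cset.filter (fun d => vsign f d.1 = -1) := by
      intro d hd
      rw [Finset.mem_filter] at hd ⊢
      refine ⟨hCclosed d hd.1, ?_⟩
      have hc : vsign f d.1 = vsign f (M.α d).1 := by
        have := hd.1
        rw [hCset, Finset.mem_filter] at this
        exact this.2.2
      rw [← hc]
      exact hd.2
    have hSflip : ∀ d ∈ Cset.filter (fun d => vsign f d.1 = -1), ψR (M.α d) = ψR d + 1 :=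
      fun d hd => hCflip d (Finset.mem_filter.mp hd).1
    exact ⟨_, (sum_split M.α M.invol _ hSclosed ψR hSflip).1⟩
  -- conclude parity
  have hdvd : 2 ∣ ((Pset.filter (fun d => ψR d = 1)).card + Vm.card) := by
    apply (ZMod.natCast_eq_zero_iff _ 2).mp
    push_cast
    exact hmain
  have heven : Even (ncross M f) := by
    rw [Nat.even_iff]
    omega
  -- the product
  have hprod : (∏ v : V, (Complex.I * ((vsign f v : ℤ) : ℂ))) = (-1 : ℂ) ^ (ncross M f) := by
    rw [Finset.prod_mul_distrib, Finset.prod_const, Finset.card_univ]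
    have h1 : (∏ v : V, ((vsign f v : ℤ) : ℂ))
        = ∏ v : V, (if vsign f v = -1 then (-1 : ℂ) else 1) := by
      apply Finset.prod_congr rfl
      intro v _
      rcases hpm v with h | h <;> rw [h] <;> norm_num
    rw [h1, Finset.prod_ite (fun _ => (-1 : ℂ)) (fun _ => (1 : ℂ)), Finset.prod_const,
      Finset.prod_const_one, mul_one, ← hVm]
    have hcv : Fintype.card V = 2 * (ncross M f + nbounce M f) := by omega
    have hVmcard : Vm.card = 2 * k + nbounce M f := by omega
    have h2 : ((-1 : ℂ)) ^ (nbounce M f) * ((-1 : ℂ)) ^ (nbounce M f) = 1 := by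
      rw [← pow_add]
      exact Even.neg_one_pow ⟨nbounce M f, rfl⟩
    rw [hcv, hVmcard, pow_mul, Complex.I_sq, pow_add, pow_add, pow_mul, neg_one_sq, one_pow,
      one_mul, mul_assoc, h2, mul_one]
  refine ⟨?_, heven, ?_⟩
  · rw [hprod, one_pow, one_mul]
  · rw [hprod]
    exact Even.neg_one_pow heven
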